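/- Let G be a P₅-free graph, let r ∈ V(G), and let x, y be two distinct nonadjacent neighbors of r. Then every connected component C of G' − M is complete to N(C) ∩ W_xy. -/

import Mathlib

open SimpleGraph

/-- A set of vertices is independent (pairwise nonadjacent). -/
def IndepSet {V : Type*} (G : SimpleGraph V) (s : Set V) : Prop :=
  s.Pairwise fun a b => ¬ G.Adj a b

/-- The independence number of the subgraph of `G` induced by `S`. -/
noncomputable def indepNumOn {V : Type*} (G : SimpleGraph V) (S : Set V) : ℕ :=
  sSup {n | ∃ s : Finset V, ↑s ⊆ S ∧ IndepSet G ↑s ∧ s.card = n}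

/-- The independence number of `G`. -/
noncomputable def indepNum {V : Type*} (G : SimpleGraph V) : ℕ :=
  indepNumOn G Set.univ

/-- `G` contains no induced subgraph isomorphic to `H`. -/
def Free {W V : Type*} (H : SimpleGraph W) (G : SimpleGraph V) : Prop :=
  IsEmpty (H ↪g G)

/-- The closed neighborhood of a vertex. -/
def closedNbhd {V : Type*} (G : SimpleGraph V) (v : V) : Set V :=
  insert v (G.neighborSet v)

/-- A tree-decomposition of `G` with nodes indexed by `ι`: a tree `T` together with
bags such that every vertex appears in a nonempty connected collection of bags and
every edge is contained in some bag. -/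
structure TreeDecomp {V : Type*} (G : SimpleGraph V) (ι : Type*) where
  tree : SimpleGraph ι
  isTree : tree.IsTree
  bag : ι → Set V
  subtree : ∀ v : V, (tree.induce {t | v ∈ bag t}).Connected
  covers : ∀ ⦃u v : V⦄, G.Adj u v → ∃ t, u ∈ bag t ∧ v ∈ bag t

/-- `N_r̄(v) = N(v) \\ N[r]`: the neighbors of `v` outside the closed neighborhood of `r`. -/
def Nbar {V : Type*} (G : SimpleGraph V) (r v : V) : Set V :=
  G.neighborSet v \ closedNbhd G r

/-- `M = N(r) ∪ N_r̄(x) ∪ N_r̄(y)`. -/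
def Mset {V : Type*} (G : SimpleGraph V) (r x y : V) : Set V :=
  G.neighborSet r ∪ Nbar G r x ∪ Nbar G r y

/-- `U`: the neighbors of `r` having a neighbor outside `M ∪ {r}`. -/
def Uset {V : Type*} (G : SimpleGraph V) (r x y : V) : Set V :=
  {u ∈ G.neighborSet r | (Nbar G r u \ (Nbar G r x ∪ Nbar G r y)).Nonempty}

/-- `U₀ = {u ∈ U | u ∉ N(x) ∪ N(y)}`. -/
def U0set {V : Type*} (G : SimpleGraph V) (r x y : V) : Set V :=
  {u ∈ Uset G r x y | u ∉ G.neighborSet x ∪ G.neighborSet y}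

/-- `U_x = {u ∈ U | u ∈ N(x) \\ N(y)}`. -/
def Uxset {V : Type*} (G : SimpleGraph V) (r x y : V) : Set V :=
  {u ∈ Uset G r x y | u ∈ G.neighborSet x \ G.neighborSet y}

/-- `U_y = {u ∈ U | u ∈ N(y) \\ N(x)}`. -/
def Uyset {V : Type*} (G : SimpleGraph V) (r x y : V) : Set V :=
  {u ∈ Uset G r x y | u ∈ G.neighborSet y \ G.neighborSet x}

/-- `W_x = N_r̄(x) \\ N_r̄(y)`. -/
def Wx {V : Type*} (G : SimpleGraph V) (r x y : V) : Set V :=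
  Nbar G r x \ Nbar G r y

/-- `W_y = N_r̄(y) \\ N_r̄(x)`. -/
def Wy {V : Type*} (G : SimpleGraph V) (r x y : V) : Set V :=
  Nbar G r y \ Nbar G r x

/-- `W_xy = N_r̄(x) ∩ N_r̄(y)`. -/
def Wxy {V : Type*} (G : SimpleGraph V) (r x y : V) : Set V :=
  Nbar G r x ∩ Nbar G r y

/-- `C` is a connected component of the subgraph of `G` induced by `A`:
`C ⊆ A`, `G[C]` is connected (hence nonempty), and `C` is maximal with this property. -/
def IsCompOf {V : Type*} (G : SimpleGraph V) (A C : Set V) : Prop :=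
  C ⊆ A ∧ (G.induce C).Connected ∧
    ∀ C' : Set V, C ⊆ C' → C' ⊆ A → (G.induce C').Connected → C' = C

/-- The neighborhood of the vertex set `C` in the graph `G − r`: all vertices other than
`r`, outside of `C`, having a neighbor in `C`. -/
def nbhdIn {V : Type*} (G : SimpleGraph V) (r : V) (C : Set V) : Set V :=
  {w | w ≠ r ∧ w ∉ C ∧ ∃ c ∈ C, G.Adj c w}

lemma find_pair {V : Type} (G : SimpleGraph V) (C : Set V) (w : V)
    {a b : C} (p : (G.induce C).Walk a b)
    (ha : ¬ G.Adj (a : V) w) (hb : G.Adj (b : V) w) :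
    ∃ c₁ c₂ : C, G.Adj (c₁ : V) (c₂ : V) ∧ ¬ G.Adj (c₁ : V) w ∧ G.Adj (c₂ : V) w := by
  induction p with
  | nil => exact absurd hb ha
  | @cons u v b h p ih =>
    by_cases hv : G.Adj (v : V) w
    · exact ⟨u, v, by simpa using h, ha, hv⟩
    · exact ih hv hb

/-- Let `G` be `P₅`-free, `r ∈ V(G)`, and `x, y` two distinct nonadjacent
neighbors of `r`. Then every connected component `C` of `G' − M` is complete to
`N(C) ∩ W_xy`. -/
theorem stmt_18 {V : Type} [Fintype V] (G : SimpleGraph V)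
    (hP5 : _root_.Free (pathGraph 5) G)
    (r x y : V) (hrx : G.Adj r x) (hry : G.Adj r y) (hxy : x ≠ y) (hnadj : ¬ G.Adj x y)
    (C : Set V) (hC : IsCompOf G (({r} ∪ Mset G r x y)ᶜ) C) :
    ∀ c ∈ C, ∀ w ∈ nbhdIn G r C ∩ Wxy G r x y, G.Adj c w := by
  intro c hc w hw
  obtain ⟨⟨hwr, hwC, c', hc', hc'w⟩, hwx, hwy⟩ := hw
  obtain ⟨hxw, hwNr⟩ := hwx
  obtain ⟨hyw, -⟩ := hwy
  rw [mem_neighborSet] at hxw hyw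
  have hrw : ¬ G.Adj r w := fun h => hwNr (Set.mem_insert_of_mem _ h)
  by_contra hcw
  have hCfacts : ∀ z ∈ C, z ≠ r ∧ ¬ G.Adj r z ∧ ¬ G.Adj x z ∧ ¬ G.Adj y z := by
    intro z hz
    have h := hC.1 hz
    simp only [Set.mem_compl_iff, Set.mem_union, Set.mem_singleton_iff, Mset, Nbar,
      closedNbhd, Set.mem_diff, Set.mem_insert_iff, mem_neighborSet, not_or, not_and,
      not_not] at h
    obtain ⟨hzr, ⟨hzNr, hx'⟩, hy'⟩ := h
    exact ⟨hzr, hzNr, fun h => hzNr (hx' h hzr), fun h => hzNr (hy' h hzr)⟩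
  obtain ⟨p⟩ := hC.2.1.preconnected ⟨c, hc⟩ ⟨c', hc'⟩
  obtain ⟨c₁, c₂, hadj, h1w, h2w⟩ := find_pair G C w p hcw hc'w
  obtain ⟨h1r, h1ra, h1xa, h1ya⟩ := hCfacts c₁ c₁.2
  obtain ⟨h2r, h2ra, h2xa, h2ya⟩ := hCfacts c₂ c₂.2
  clear hcw hc'w p hCfacts hc hc' hwNr
  -- adjacency facts, both directions
  have a_xr : G.Adj x r := hrx.symm
  have a_wx : G.Adj w x := hxw.symm
  have a_wc2 : G.Adj w (c₂ : V) := h2w.symm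
  have a_c2c1 : G.Adj (c₂ : V) (c₁ : V) := hadj.symm
  have n_wr : ¬ G.Adj w r := fun h => hrw h.symm
  have n_c2r : ¬ G.Adj (c₂ : V) r := fun h => h2ra h.symm
  have n_c1r : ¬ G.Adj (c₁ : V) r := fun h => h1ra h.symm
  have n_c2x : ¬ G.Adj (c₂ : V) x := fun h => h2xa h.symm
  have n_c1x : ¬ G.Adj (c₁ : V) x := fun h => h1xa h.symm
  have n_wc1 : ¬ G.Adj w (c₁ : V) := fun h => h1w h.symm
  -- distinctness, both directions
  have e_rx : r ≠ x := hrx.ne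
  have e_xr : x ≠ r := hrx.ne'
  have e_xw : x ≠ w := hxw.ne
  have e_wx : w ≠ x := hxw.ne'
  have e_wc2 : w ≠ (c₂ : V) := a_wc2.ne
  have e_c2w : (c₂ : V) ≠ w := a_wc2.ne'
  have e_c2c1 : (c₂ : V) ≠ (c₁ : V) := a_c2c1.ne
  have e_c1c2 : (c₁ : V) ≠ (c₂ : V) := a_c2c1.ne'
  have e_rw : r ≠ w := hwr.symm
  have e_rc2 : r ≠ (c₂ : V) := h2r.symm
  have e_c2r : (c₂ : V) ≠ r := h2r
  have e_rc1 : r ≠ (c₁ : V) := h1r.symm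
  have e_c1r : (c₁ : V) ≠ r := h1r
  have e_xc2 : x ≠ (c₂ : V) := by rintro rfl; exact h2ra hrx
  have e_c2x : (c₂ : V) ≠ x := fun h => e_xc2 h.symm
  have e_xc1 : x ≠ (c₁ : V) := by rintro rfl; exact h1ra hrx
  have e_c1x : (c₁ : V) ≠ x := fun h => e_xc1 h.symm
  have e_wc1 : w ≠ (c₁ : V) := by rintro rfl; exact hwC c₁.2
  have e_c1w : (c₁ : V) ≠ w := fun h => e_wc1 h.symm
  refine hP5.elim' ⟨⟨![r, x, w, (c₂ : V), (c₁ : V)], ?_⟩, ?_⟩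
  · intro i j hij
    fin_cases i <;> fin_cases j <;> simp_all <;> decide
  · intro i j
    change G.Adj (![r, x, w, (c₂ : V), (c₁ : V)] i) (![r, x, w, (c₂ : V), (c₁ : V)] j) ↔ _
    fin_cases i <;> fin_cases j <;>
      simp_all [pathGraph_adj, SimpleGraph.irrefl] <;> decide
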